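/- Let L ⊆ ℝⁿ be a full-rank lattice and L' ⊆ L a primitive sublattice (L' = L ∩ span(L')). Then μ(L)² ≤ μ(L')² + μ(L/L')², where L/L' is the orthogonal projection of L onto the orthogonal complement of span(L'). -/

import Mathlib

open Metric Submodule
noncomputable section

/-- The covering radius of a lattice (given as a set): the supremum, over points `x` in the
real span of `A`, of the distance from `x` to `A`. -/
def covRad {E : Type*} [NormedAddCommGroup E] [NormedSpace ℝ E] (A : Set E) : ℝ :=
  sSup ((fun x => Metric.infDist x A) '' ((Submodule.span ℝ A : Submodule ℝ E) : Set E))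

/-- The image of the set `A` under the orthogonal projection onto the orthogonal complement
of the real span of `S`. -/
def projPerp {n : ℕ} (S A : Set (EuclideanSpace ℝ (Fin n))) : Set (EuclideanSpace ℝ (Fin n)) :=
  (fun x => ((orthogonalProjection (Submodule.span ℝ S)ᗮ) x : EuclideanSpace ℝ (Fin n))) '' A

section Aux

variable {n : ℕ}

theorem covRadAux_exists_bound (M : Submodule ℤ (EuclideanSpace ℝ (Fin n))) :
    ∃ C : ℝ, ∀ x ∈ (span ℝ (M : Set (EuclideanSpace ℝ (Fin n))) :
        Submodule ℝ (EuclideanSpace ℝ (Fin n))),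
      infDist x (M : Set (EuclideanSpace ℝ (Fin n))) ≤ C := by
  obtain ⟨b, hbM, hbspan, hbli⟩ :=
    exists_linearIndependent ℝ (M : Set (EuclideanSpace ℝ (Fin n)))
  have hbfin : b.Finite := hbli.setFinite
  refine ⟨∑ v ∈ hbfin.toFinset, ‖v‖, fun x hx => ?_⟩
  rw [← hbspan, ← hbfin.coe_toFinset] at hx
  obtain ⟨c, hc⟩ := mem_span_finset.mp hx
  set s := hbfin.toFinset with hs
  set z := ∑ v ∈ s, (⌊c v⌋ : ℤ) • v with hz
  have hzM : z ∈ M := by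
    refine sum_mem fun v hv => zsmul_mem (hbM ?_) _
    rw [hs, Set.Finite.mem_toFinset] at hv
    exact hv
  have hxz : x - z = ∑ v ∈ s, Int.fract (c v) • v := by
    rw [← hc.2, hz, ← Finset.sum_sub_distrib]
    refine Finset.sum_congr rfl fun v hv => ?_
    rw [← Int.cast_smul_eq_zsmul ℝ, ← sub_smul, Int.fract]
  have hnormle : dist x z ≤ ∑ v ∈ s, ‖v‖ := by
    rw [dist_eq_norm, hxz]
    refine (norm_sum_le _ _).trans (Finset.sum_le_sum fun v hv => ?_)
    rw [norm_smul, Real.norm_eq_abs, abs_of_nonneg (Int.fract_nonneg _)]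
    nlinarith [Int.fract_lt_one (c v), norm_nonneg v, Int.fract_nonneg (c v)]
  exact (infDist_le_dist_of_mem hzM).trans hnormle

theorem covRadAux_le_covRad (M : Submodule ℤ (EuclideanSpace ℝ (Fin n)))
    {x : EuclideanSpace ℝ (Fin n)}
    (hx : x ∈ (span ℝ (M : Set (EuclideanSpace ℝ (Fin n))) :
        Submodule ℝ (EuclideanSpace ℝ (Fin n)))) :
    infDist x (M : Set (EuclideanSpace ℝ (Fin n)))
      ≤ covRad (M : Set (EuclideanSpace ℝ (Fin n))) := by
  obtain ⟨C, hC⟩ := covRadAux_exists_bound M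
  refine le_csSup ⟨C, ?_⟩ ⟨x, hx, rfl⟩
  rintro r ⟨y, hy, rfl⟩
  exact hC y hy

theorem covRadAux_nonneg (M : Submodule ℤ (EuclideanSpace ℝ (Fin n))) :
    0 ≤ covRad (M : Set (EuclideanSpace ℝ (Fin n))) := by
  refine Real.sSup_nonneg ?_
  rintro r ⟨y, hy, rfl⟩
  exact infDist_nonneg

end Aux

/-- For a primitive sublattice `L' ⊆ L`, `μ(L)² ≤ μ(L')² + μ(L/L')²`, where `L/L'` is the
orthogonal projection of `L` onto the orthogonal complement of `span(L')`. -/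
theorem covRad_sq_le_covRad_sq_add_covRad_sq
    (n : ℕ) (L : Submodule ℤ (EuclideanSpace ℝ (Fin n))) [DiscreteTopology L]
    (hL : IsZLattice ℝ L)
    (L' : Submodule ℤ (EuclideanSpace ℝ (Fin n))) (hle : L' ≤ L)
    (hprim : (L' : Set (EuclideanSpace ℝ (Fin n)))
      = (L : Set (EuclideanSpace ℝ (Fin n)))
        ∩ (Submodule.span ℝ (L' : Set (EuclideanSpace ℝ (Fin n))) :
            Submodule ℝ (EuclideanSpace ℝ (Fin n)))) :
    covRad (L : Set (EuclideanSpace ℝ (Fin n))) ^ 2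
      ≤ covRad (L' : Set (EuclideanSpace ℝ (Fin n))) ^ 2
        + covRad (projPerp (L' : Set (EuclideanSpace ℝ (Fin n)))
            (L : Set (EuclideanSpace ℝ (Fin n)))) ^ 2 := by
  classical
  set K : Submodule ℝ (EuclideanSpace ℝ (Fin n)) :=
    span ℝ (L' : Set (EuclideanSpace ℝ (Fin n))) with hK
  -- the projection as a full linear map
  set Pf : EuclideanSpace ℝ (Fin n) →ₗ[ℝ] EuclideanSpace ℝ (Fin n) :=
    Kᗮ.subtype.comp (orthogonalProjection Kᗮ : _ →ₗ[ℝ] _) with hPf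
  set Mproj : Submodule ℤ (EuclideanSpace ℝ (Fin n)) :=
    L.map (Pf.restrictScalars ℤ) with hMproj
  have hset : (Mproj : Set (EuclideanSpace ℝ (Fin n)))
      = projPerp (L' : Set (EuclideanSpace ℝ (Fin n)))
          (L : Set (EuclideanSpace ℝ (Fin n))) := by
    rw [hMproj, Submodule.map_coe]
    rfl
  set c₁ : ℝ := covRad (L' : Set (EuclideanSpace ℝ (Fin n))) with hc₁
  set c₂ : ℝ := covRad (projPerp (L' : Set (EuclideanSpace ℝ (Fin n)))
      (L : Set (EuclideanSpace ℝ (Fin n)))) with hc₂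
  have hc₁0 : 0 ≤ c₁ := covRadAux_nonneg L'
  have hc₂0 : 0 ≤ c₂ := by rw [hc₂, ← hset]; exact covRadAux_nonneg Mproj
  have key : ∀ ε : ℝ, 0 < ε →
      covRad (L : Set (EuclideanSpace ℝ (Fin n)))
        ≤ Real.sqrt ((c₁ + ε) ^ 2 + (c₂ + ε) ^ 2) := by
    intro ε hε
    refine Real.sSup_le ?_ (Real.sqrt_nonneg _)
    rintro _ ⟨x, hx, rfl⟩
    -- project x
    have hy : Pf x ∈ (span ℝ (Mproj : Set (EuclideanSpace ℝ (Fin n))) :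
        Submodule ℝ (EuclideanSpace ℝ (Fin n))) := by
      have : (Mproj : Set (EuclideanSpace ℝ (Fin n)))
          = Pf '' (L : Set (EuclideanSpace ℝ (Fin n))) := by
        rw [hMproj, Submodule.map_coe]; rfl
      rw [this, Submodule.span_image]
      exact Submodule.mem_map_of_mem hx
    have h1 : infDist (Pf x) (Mproj : Set (EuclideanSpace ℝ (Fin n))) < c₂ + ε := by
      have h := covRadAux_le_covRad Mproj hy
      rw [hset, ← hc₂] at h
      rw [hset]
      linarith
    obtain ⟨z, hzmem, hz⟩ :=
      (infDist_lt_iff ⟨0, Mproj.zero_mem⟩).mp h1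
    obtain ⟨ℓ, hℓL, rfl⟩ := Submodule.mem_map.mp hzmem
    -- now approximate the parallel component
    set w : EuclideanSpace ℝ (Fin n) := (orthogonalProjection K (x - ℓ) :
      EuclideanSpace ℝ (Fin n)) with hw
    have hwK : w ∈ K := SetLike.coe_mem _
    have h2 : infDist w (L' : Set (EuclideanSpace ℝ (Fin n))) < c₁ + ε := by
      have := covRadAux_le_covRad L' (by rw [← hK]; exact hwK)
      rw [← hc₁] at this
      linarith
    obtain ⟨ℓ', hℓ'mem, hℓ'⟩ :=
      (infDist_lt_iff ⟨0, L'.zero_mem⟩).mp h2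
    have hmL : ℓ + ℓ' ∈ L := add_mem hℓL (hle hℓ'mem)
    -- orthogonal decomposition of x - ℓ
    have hdecomp : x - ℓ = w + Pf (x - ℓ) :=
      (K.starProjection_add_starProjection_orthogonal (x - ℓ)).symm
    have hxm : x - (ℓ + ℓ') = (w - ℓ') + Pf (x - ℓ) := by
      have h : x - (ℓ + ℓ') = (x - ℓ) - ℓ' := by abel
      rw [h]
      conv_lhs => rw [hdecomp]
      abel
    have haK : w - ℓ' ∈ K := sub_mem hwK (subset_span hℓ'mem)
    have hbK : Pf (x - ℓ) ∈ Kᗮ := SetLike.coe_mem _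
    have hinner : (inner ℝ (w - ℓ') (Pf (x - ℓ)) : ℝ) = 0 :=
      (Submodule.mem_orthogonal K (Pf (x - ℓ))).mp hbK _ haK
    have hnormsq : ‖x - (ℓ + ℓ')‖ ^ 2 = ‖w - ℓ'‖ ^ 2 + ‖Pf (x - ℓ)‖ ^ 2 := by
      rw [hxm, norm_add_sq_real, hinner]
      ring
    have hb' : ‖Pf (x - ℓ)‖ < c₂ + ε := by
      have h : Pf (x - ℓ) = Pf x - Pf ℓ := map_sub Pf x ℓ
      rw [h, ← dist_eq_norm]
      exact hz
    have ha' : ‖w - ℓ'‖ < c₁ + ε := by rw [← dist_eq_norm]; exact hℓ'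
    have hsq : ‖x - (ℓ + ℓ')‖ ^ 2 ≤ (c₁ + ε) ^ 2 + (c₂ + ε) ^ 2 := by
      rw [hnormsq]
      have h₁ : ‖w - ℓ'‖ ^ 2 ≤ (c₁ + ε) ^ 2 :=
        pow_le_pow_left₀ (norm_nonneg _) ha'.le 2
      have h₂ : ‖Pf (x - ℓ)‖ ^ 2 ≤ (c₂ + ε) ^ 2 :=
        pow_le_pow_left₀ (norm_nonneg _) hb'.le 2
      linarith
    have : dist x (ℓ + ℓ') ≤ Real.sqrt ((c₁ + ε) ^ 2 + (c₂ + ε) ^ 2) := by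
      rw [dist_eq_norm, ← Real.sqrt_sq (norm_nonneg (x - (ℓ + ℓ')))]
      exact Real.sqrt_le_sqrt hsq
    exact (infDist_le_dist_of_mem hmL).trans this
  -- pass to the limit ε → 0⁺
  have hlim : covRad (L : Set (EuclideanSpace ℝ (Fin n)))
      ≤ Real.sqrt (c₁ ^ 2 + c₂ ^ 2) := by
    have hcont : Filter.Tendsto (fun ε : ℝ => Real.sqrt ((c₁ + ε) ^ 2 + (c₂ + ε) ^ 2))
        (nhdsWithin 0 (Set.Ioi 0)) (nhds (Real.sqrt (c₁ ^ 2 + c₂ ^ 2))) := by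
      have hc : Continuous fun ε : ℝ => Real.sqrt ((c₁ + ε) ^ 2 + (c₂ + ε) ^ 2) :=
        (((continuous_const.add continuous_id).pow 2).add
          ((continuous_const.add continuous_id).pow 2)).sqrt
      have h := (hc.tendsto 0).mono_left
        (nhdsWithin_le_nhds (s := Set.Ioi (0:ℝ)))
      simpa using h
    refine ge_of_tendsto hcont ?_
    filter_upwards [self_mem_nhdsWithin] with ε hε
    exact key ε hε
  have hfinal : covRad (L : Set (EuclideanSpace ℝ (Fin n))) ^ 2 ≤ c₁ ^ 2 + c₂ ^ 2 := by
    have h0 : 0 ≤ covRad (L : Set (EuclideanSpace ℝ (Fin n))) := covRadAux_nonneg L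
    calc covRad (L : Set (EuclideanSpace ℝ (Fin n))) ^ 2
        ≤ Real.sqrt (c₁ ^ 2 + c₂ ^ 2) ^ 2 := pow_le_pow_left₀ h0 hlim 2
      _ = c₁ ^ 2 + c₂ ^ 2 := Real.sq_sqrt (by positivity)
  exact hfinal
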